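/- Let λ, μ > 0, z > 0, t ≥ 0 and k ∈ ℤ, and let A be the 2×2 real matrix A := [[−2λ, μ(z²+1)/z], [λ(z²+1)/z, −2μ]]. Then the matrix exponential satisfies exp(tA)·(z^{2k}, 0)ᵀ = e^{−(λ+μ)t}·(z^{2k}/h(z))·( h(z)·cosh(t·h(z)/z) + z(μ−λ)·sinh(t·h(z)/z), λ(z²+1)·sinh(t·h(z)/z) )ᵀ and exp(tA)·(0, z^{2k+1})ᵀ = e^{−(λ+μ)t}·(z^{2k+1}/h(z))·( μ(z²+1)·sinh(t·h(z)/z), h(z)·cosh(t·h(z)/z) + z(λ−μ)·sinh(t·h(z)/z) )ᵀ. -/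

import Mathlib

set_option maxHeartbeats 1000000

open Matrix

/-- `h(z) = √((μz²+λ)(λz²+μ))`. -/
noncomputable def hFun (lam mu z : ℝ) : ℝ := Real.sqrt ((mu * z ^ 2 + lam) * (lam * z ^ 2 + mu))

private lemma diag_fin_two (x y : ℝ) :
    (Matrix.diagonal ![x, y] : Matrix (Fin 2) (Fin 2) ℝ) = !![x, 0; 0, y] := by
  ext i j
  fin_cases i <;> fin_cases j <;> simp

/-- Action of the matrix exponential `exp(tA)` on the initial vectors `(z^{2k},0)ᵀ` and
`(0,z^{2k+1})ᵀ`. -/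
theorem matrix_exponential_action (lam mu z t : ℝ) (hlam : 0 < lam) (hmu : 0 < mu)
    (hz : 0 < z) (ht : 0 ≤ t) (k : ℤ) :
    let h : ℝ := hFun lam mu z
    let A : Matrix (Fin 2) (Fin 2) ℝ :=
      !![-2 * lam, mu * (z ^ 2 + 1) / z; lam * (z ^ 2 + 1) / z, -2 * mu]
    (NormedSpace.exp (t • A)).mulVec ![z ^ (2 * k), 0] =
      (Real.exp (-(lam + mu) * t) * (z ^ (2 * k) / h)) •
        ![h * Real.cosh (t * h / z) + z * (mu - lam) * Real.sinh (t * h / z),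
          lam * (z ^ 2 + 1) * Real.sinh (t * h / z)] ∧
    (NormedSpace.exp (t • A)).mulVec ![0, z ^ (2 * k + 1)] =
      (Real.exp (-(lam + mu) * t) * (z ^ (2 * k + 1) / h)) •
        ![mu * (z ^ 2 + 1) * Real.sinh (t * h / z),
          h * Real.cosh (t * h / z) + z * (lam - mu) * Real.sinh (t * h / z)] := by
  intro h A
  have hA0 : A = !![-2 * lam, mu * (z ^ 2 + 1) / z; lam * (z ^ 2 + 1) / z, -2 * mu] := rfl
  have hzne : z ≠ 0 := hz.ne'
  have hprod : 0 < (mu * z ^ 2 + lam) * (lam * z ^ 2 + mu) := by positivity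
  have hhpos : 0 < h := Real.sqrt_pos.mpr hprod
  have hhne : h ≠ 0 := hhpos.ne'
  have hhsq : h ^ 2 = (mu * z ^ 2 + lam) * (lam * z ^ 2 + mu) := Real.sq_sqrt hprod.le
  clear_value h
  obtain ⟨a, ha⟩ : ∃ a : ℝ, a = mu - lam := ⟨_, rfl⟩
  obtain ⟨b, hb⟩ : ∃ b : ℝ, b = mu * (z ^ 2 + 1) / z := ⟨_, rfl⟩
  obtain ⟨ω, hωdef⟩ : ∃ w : ℝ, w = h / z := ⟨_, rfl⟩
  have hωpos : 0 < ω := hωdef ▸ div_pos hhpos hz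
  have hωne : ω ≠ 0 := hωpos.ne'
  have hbne : b ≠ 0 := by
    have : 0 < b := by rw [hb]; positivity
    exact this.ne'
  have hh : h = z * ω := by rw [hωdef]; field_simp
  have hω2 : ω ^ 2 * z ^ 2 = a ^ 2 * z ^ 2 + lam * mu * (z ^ 2 + 1) ^ 2 := by
    have h1 : ω ^ 2 * z ^ 2 = h ^ 2 := by rw [hh]; ring
    rw [h1, hhsq, ha]; ring
  have hcb : lam * (z ^ 2 + 1) / z = (ω ^ 2 - a ^ 2) / b := by
    rw [div_eq_div_iff hzne hbne, hb]
    field_simp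
    linear_combination -hω2
  obtain ⟨P, hP⟩ : ∃ P : Matrix (Fin 2) (Fin 2) ℝ, P = !![b, b; ω - a, -ω - a] := ⟨_, rfl⟩
  obtain ⟨Q, hQ⟩ : ∃ Q : Matrix (Fin 2) (Fin 2) ℝ,
      Q = !![(-ω - a) / (-(2 * b * ω)), (-b) / (-(2 * b * ω));
             (a - ω) / (-(2 * b * ω)), b / (-(2 * b * ω))] := ⟨_, rfl⟩
  have hPQ : P * Q = 1 := by
    rw [hP, hQ]
    ext i j
    fin_cases i <;> fin_cases j <;>
      simp [Matrix.mul_apply, Fin.sum_univ_two] <;> field_simp <;> ring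
  have hPunit : IsUnit P := by
    have : IsUnit P.det := IsUnit.of_mul_eq_one (a := P.det) Q.det
      (by rw [← Matrix.det_mul, hPQ, Matrix.det_one])
    exact (Matrix.isUnit_iff_isUnit_det P).mpr this
  have hPinv : P⁻¹ = Q := Matrix.inv_eq_right_inv hPQ
  obtain ⟨D, hD⟩ : ∃ D : Matrix (Fin 2) (Fin 2) ℝ,
      D = Matrix.diagonal ![-(lam + mu) * t + t * ω, -(lam + mu) * t - t * ω] := ⟨_, rfl⟩
  have hA : A = !![-(lam + mu) + a, b; (ω ^ 2 - a ^ 2) / b, -(lam + mu) - a] := by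
    rw [hA0, ← hb, hcb, ha]
    congr 1 <;> ring
  have hKey : t • A = P * D * Q := by
    rw [hA, hP, hQ, hD, diag_fin_two]
    ext i j
    fin_cases i <;> fin_cases j <;>
      · simp [Matrix.mul_apply, Fin.sum_univ_two]
        field_simp
        ring
  have hexpD : NormedSpace.exp D =
      !![Real.exp (-(lam + mu) * t + t * ω), 0; 0, Real.exp (-(lam + mu) * t - t * ω)] := by
    have hfun : NormedSpace.exp ![-(lam + mu) * t + t * ω, -(lam + mu) * t - t * ω] =
        ![Real.exp (-(lam + mu) * t + t * ω), Real.exp (-(lam + mu) * t - t * ω)] := by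
      funext i
      fin_cases i <;> simp [← Real.exp_eq_exp_ℝ]
    rw [hD, Matrix.exp_diagonal, hfun, diag_fin_two]
  have hprodM : ∀ e1 e2 : ℝ, P * !![e1, 0; 0, e2] * Q =
      !![(e1 * (ω + a) + e2 * (ω - a)) / (2 * ω), b * (e1 - e2) / (2 * ω);
         (ω ^ 2 - a ^ 2) * (e1 - e2) / (2 * b * ω),
         (e1 * (ω - a) + e2 * (ω + a)) / (2 * ω)] := by
    intro e1 e2
    rw [hP, hQ]
    ext i j
    fin_cases i <;> fin_cases j <;>
      · simp [Matrix.mul_apply, Fin.sum_univ_two]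
        field_simp
        ring
  obtain ⟨S, hS⟩ : ∃ S : ℝ, S = Real.exp (-(lam + mu) * t) := ⟨_, rfl⟩
  obtain ⟨E, hE⟩ : ∃ E : ℝ, E = Real.exp (t * ω) := ⟨_, rfl⟩
  have hEne : E ≠ 0 := by rw [hE]; exact (Real.exp_pos _).ne'
  have hexp : NormedSpace.exp (t • A) =
      !![(S * E * (ω + a) + S / E * (ω - a)) / (2 * ω), b * (S * E - S / E) / (2 * ω);
         (ω ^ 2 - a ^ 2) * (S * E - S / E) / (2 * b * ω),
         (S * E * (ω - a) + S / E * (ω + a)) / (2 * ω)] := by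
    rw [hKey, ← hPinv, Matrix.exp_conj P D hPunit, hPinv, hexpD, hprodM,
      show Real.exp (-(lam + mu) * t + t * ω) = S * E from by rw [hS, hE, Real.exp_add],
      show Real.exp (-(lam + mu) * t - t * ω) = S / E from by rw [hS, hE, Real.exp_sub]]
  have harg : t * h / z = t * ω := by rw [hh]; field_simp
  have hcosh : Real.cosh (t * ω) = (E + E⁻¹) / 2 := by
    rw [Real.cosh_eq, Real.exp_neg, hE]
  have hsinh : Real.sinh (t * ω) = (E - E⁻¹) / 2 := by
    rw [Real.sinh_eq, Real.exp_neg, hE]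
  have hmuz : mu * (z ^ 2 + 1) = b * z := by rw [hb]; field_simp
  have hlamz : lam * (z ^ 2 + 1) = (ω ^ 2 - a ^ 2) / b * z := by
    rw [← hcb]; field_simp
  constructor
  · rw [hexp, harg, hcosh, hsinh, hh, ← hS,
      show z * (mu - lam) = z * a from by rw [ha], hlamz]
    ext i
    fin_cases i <;>
    · simp [Matrix.mulVec, dotProduct, Fin.sum_univ_two]
      field_simp <;>
      ring
  · rw [hexp, harg, hcosh, hsinh, hh, ← hS,
      show z * (lam - mu) = -(z * a) from by rw [ha]; ring, hmuz]
    ext i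
    fin_cases i <;>
    · simp [Matrix.mulVec, dotProduct, Fin.sum_univ_two]
      field_simp <;>
      ring
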